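/- Let $k \ge 2$ and let $X$ be a symmetric $\mathbb{C}^{d\times d}$-valued random variable (i.e., $X$ and $-X$ have the same distribution) with $\mathbb{E}X = 0$ and $\mathbb{E}[\|X\|_{HS}^{2k}] < \infty$, and let $f$ be the associated random matrix-valued multiplicative function. Then $\mathbb{E}\big[\big\|\sum_{n\le x} f(n)\big\|_{HS}^{2k}\big] \le \sum_{\substack{n_1,\dots,n_{2k}\le x \\ n_1\cdots n_{2k}=\square}} \prod_{i=1}^{2k} \mathbb{E}[\|f(n_i)\|_{HS}^{2k}]^{1/(2k)}$. -/

import Mathlib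

open Matrix MeasureTheory ProbabilityTheory
open scoped ENNReal NNReal

noncomputable instance matMS {d : ℕ} : MeasurableSpace (Matrix (Fin d) (Fin d) ℂ) :=
  MeasurableSpace.pi

/-- The Hilbert–Schmidt norm `‖A‖_{HS} = √(Tr(A^* A))`. -/
noncomputable def hsNorm {d : ℕ} (A : Matrix (Fin d) (Fin d) ℂ) : ℝ :=
  Real.sqrt (Matrix.trace (Aᴴ * A)).re

/-- The random matrix-valued multiplicative function built from the family `g` of
values at the primes. -/
noncomputable def rmf {Ω : Type*} {d : ℕ} (g : ℕ → Ω → Matrix (Fin d) (Fin d) ℂ)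
    (n : ℕ) (ω : Ω) : Matrix (Fin d) (Fin d) ℂ :=
  if Squarefree n then ((n.primeFactorsList).map fun p => g p ω).prod else 0

namespace Aux

variable {d : ℕ}

/-- The embedding of matrices into Euclidean space. -/
noncomputable def emb (A : (Matrix (Fin d) (Fin d) ℂ)) : EuclideanSpace ℂ (Fin d × Fin d) :=
  (WithLp.equiv 2 ((Fin d × Fin d) → ℂ)).symm (fun p => A p.1 p.2)

lemma emb_add (A B : (Matrix (Fin d) (Fin d) ℂ)) : emb (A + B) = emb A + emb B := rfl

lemma emb_neg (A : (Matrix (Fin d) (Fin d) ℂ)) : emb (-A) = -(emb A) := rfl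

lemma emb_sum {α : Type*} (s : Finset α) (F : α → (Matrix (Fin d) (Fin d) ℂ)) :
    emb (∑ a ∈ s, F a) = ∑ a ∈ s, emb (F a) := by
  classical
  induction s using Finset.induction with
  | empty => rfl
  | insert _ _ h ih => simp [Finset.sum_insert h, emb_add, ih]

lemma hsNorm_eq_norm_emb (A : (Matrix (Fin d) (Fin d) ℂ)) : hsNorm A = ‖emb A‖ := by
  rw [EuclideanSpace.norm_eq, hsNorm]
  congr 1
  have : Matrix.trace (Aᴴ * A) = ((∑ p : Fin d × Fin d, Complex.normSq (A p.1 p.2) : ℝ) : ℂ) := by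
    rw [Matrix.trace]
    simp only [Matrix.diag, Matrix.mul_apply, Matrix.conjTranspose_apply]
    push_cast
    rw [Fintype.sum_prod_type]
    rw [Finset.sum_comm]
    congr 1; ext i; congr 1; ext j
    rw [mul_comm]
    exact Complex.mul_conj _
  rw [this, Complex.ofReal_re]
  congr 1; ext p
  simp [emb, Complex.normSq_eq_norm_sq]

lemma hsNorm_nonneg (A : (Matrix (Fin d) (Fin d) ℂ)) : 0 ≤ hsNorm A := by
  rw [hsNorm_eq_norm_emb]; exact norm_nonneg _

/-- Hilbert-Schmidt inner product. -/
noncomputable def minner (A B : (Matrix (Fin d) (Fin d) ℂ)) : ℂ := inner (𝕜 := ℂ) (emb A) (emb B)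

lemma norm_minner_le (A B : (Matrix (Fin d) (Fin d) ℂ)) : ‖minner A B‖ ≤ hsNorm A * hsNorm B := by
  rw [minner, hsNorm_eq_norm_emb, hsNorm_eq_norm_emb]
  exact norm_inner_le_norm _ _

lemma minner_self (A : (Matrix (Fin d) (Fin d) ℂ)) : minner A A = ((hsNorm A : ℂ)) ^ 2 := by
  rw [minner, inner_self_eq_norm_sq_to_K, hsNorm_eq_norm_emb]
  norm_cast

lemma minner_neg_left (A B : (Matrix (Fin d) (Fin d) ℂ)) : minner (-A) B = -minner A B := by
  rw [minner, emb_neg, inner_neg_left]; rfl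

lemma minner_neg_right (A B : (Matrix (Fin d) (Fin d) ℂ)) : minner A (-B) = -minner A B := by
  rw [minner, emb_neg, inner_neg_right]; rfl

lemma minner_zero_left (B : Matrix (Fin d) (Fin d) ℂ) : minner 0 B = 0 := by
  rw [minner]
  have : emb (0 : Matrix (Fin d) (Fin d) ℂ) = 0 := rfl
  rw [this, inner_zero_left]

lemma minner_zero_right (A : Matrix (Fin d) (Fin d) ℂ) : minner A 0 = 0 := by
  rw [minner]
  have : emb (0 : Matrix (Fin d) (Fin d) ℂ) = 0 := rfl
  rw [this, inner_zero_right]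

lemma minner_sum (s t : Finset ℕ) (F G : ℕ → (Matrix (Fin d) (Fin d) ℂ)) :
    minner (∑ m ∈ s, F m) (∑ n ∈ t, G n) = ∑ m ∈ s, ∑ n ∈ t, minner (F m) (G n) := by
  rw [minner, emb_sum, emb_sum, sum_inner]
  exact Finset.sum_congr rfl fun m _ => by rw [inner_sum]; rfl

lemma minner_eq_sum (A B : (Matrix (Fin d) (Fin d) ℂ)) :
    minner A B = ∑ p : Fin d × Fin d, (starRingEnd ℂ) (A p.1 p.2) * B p.1 p.2 := by
  rw [minner, PiLp.inner_apply]
  exact Finset.sum_congr rfl fun p _ => mul_comm _ _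


/-- `rmf` as a function of an assignment of matrices to all naturals. -/
noncomputable def rmfV (v : ℕ → (Matrix (Fin d) (Fin d) ℂ)) (n : ℕ) : (Matrix (Fin d) (Fin d) ℂ) :=
  if Squarefree n then ((n.primeFactorsList).map v).prod else 0

lemma rmf_eq_rmfV {Ω : Type*} (g : ℕ → Ω → (Matrix (Fin d) (Fin d) ℂ)) (n : ℕ) (ω : Ω) :
    rmf g n ω = rmfV (fun q => g q ω) n := rfl

lemma list_prod_flip (p : ℕ) (v v' : ℕ → (Matrix (Fin d) (Fin d) ℂ)) (hv : ∀ q, v' q = if q = p then -(v q) else v q) :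
    ∀ (l : List ℕ), l.Nodup →
      (l.map v').prod = if p ∈ l then -((l.map v).prod) else (l.map v).prod := by
  intro l
  induction l with
  | nil => simp
  | cons q l ih =>
    intro hnd
    have hnd' : l.Nodup := (List.nodup_cons.mp hnd).2
    have hq : q ∉ l → True := fun _ => trivial
    by_cases hqp : q = p
    · subst hqp
      have hpl : q ∉ l := (List.nodup_cons.mp hnd).1
      simp only [List.map_cons, List.prod_cons, hv q, if_pos rfl, List.mem_cons, true_or, if_pos]
      have : (l.map v').prod = (l.map v).prod := by
        rw [ih hnd', if_neg hpl]
      rw [this, neg_mul]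
    · simp only [List.map_cons, List.prod_cons, hv q, if_neg hqp, List.mem_cons]
      rw [ih hnd']
      by_cases hpl : p ∈ l
      · rw [if_pos hpl, if_pos (Or.inr hpl), mul_neg]
      · rw [if_neg hpl, if_neg (by tauto)]

lemma rmfV_flip (p : ℕ) (hp : p.Prime) (v v' : ℕ → (Matrix (Fin d) (Fin d) ℂ))
    (hv : ∀ q, v' q = if q = p then -(v q) else v q) (n : ℕ) :
    rmfV v' n = if p ∣ n then -(rmfV v n) else rmfV v n := by
  by_cases hn : Squarefree n
  · rw [rmfV, rmfV, if_pos hn, if_pos hn,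
      list_prod_flip p v v' hv _ hn.nodup_primeFactorsList]
    simp only [Nat.mem_primeFactorsList_iff_dvd hn.ne_zero hp]
  · rw [rmfV, rmfV, if_neg hn, if_neg hn]
    simp

lemma hsNorm_sq (A : (Matrix (Fin d) (Fin d) ℂ)) : hsNorm A ^ 2 = ∑ p : Fin d × Fin d, ‖A p.1 p.2‖ ^ 2 := by
  rw [hsNorm_eq_norm_emb, EuclideanSpace.norm_eq, Real.sq_sqrt (by positivity)]
  simp [emb]

lemma entry_bound (A B : (Matrix (Fin d) (Fin d) ℂ)) (p q : Fin d) :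
    ‖(A * B) p q‖ ^ 2 ≤ (∑ j, ‖A p j‖ ^ 2) * (∑ j, ‖B j q‖ ^ 2) := by
  set x : EuclideanSpace ℂ (Fin d) := (WithLp.equiv 2 _).symm (fun j => star (A p j)) with hxd
  set y : EuclideanSpace ℂ (Fin d) := (WithLp.equiv 2 _).symm (fun j => B j q) with hyd
  have hx : ‖x‖ ^ 2 = ∑ j, ‖A p j‖ ^ 2 := by
    rw [EuclideanSpace.norm_eq, Real.sq_sqrt (by positivity)]
    simp [hxd]
  have hy : ‖y‖ ^ 2 = ∑ j, ‖B j q‖ ^ 2 := by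
    rw [EuclideanSpace.norm_eq, Real.sq_sqrt (by positivity)]
    simp [hyd]
  have hi : inner (𝕜 := ℂ) x y = (A * B) p q := by
    rw [PiLp.inner_apply, Matrix.mul_apply]
    congr 1; ext j
    simp [hxd, hyd, mul_comm]
  rw [← hi, ← hx, ← hy, ← mul_pow]
  have := norm_inner_le_norm (𝕜 := ℂ) x y
  exact pow_le_pow_left₀ (norm_nonneg _) this 2

lemma hsNorm_mul_le (A B : (Matrix (Fin d) (Fin d) ℂ)) : hsNorm (A * B) ≤ hsNorm A * hsNorm B := by
  have h2 : hsNorm (A * B) ^ 2 ≤ (hsNorm A * hsNorm B) ^ 2 := by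
    rw [mul_pow, hsNorm_sq, hsNorm_sq, hsNorm_sq]
    calc ∑ p : Fin d × Fin d, ‖(A * B) p.1 p.2‖ ^ 2
        ≤ ∑ p : Fin d × Fin d, (∑ j, ‖A p.1 j‖ ^ 2) * (∑ j, ‖B j p.2‖ ^ 2) :=
          Finset.sum_le_sum fun p _ => entry_bound A B p.1 p.2
      _ = (∑ i, ∑ j, ‖A i j‖ ^ 2) * (∑ q, ∑ j, ‖B j q‖ ^ 2) := by
          rw [Fintype.sum_prod_type]
          dsimp only
          rw [← Finset.sum_mul_sum]
      _ = (∑ p : Fin d × Fin d, ‖A p.1 p.2‖ ^ 2) * ∑ p : Fin d × Fin d, ‖B p.1 p.2‖ ^ 2 := by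
          rw [Fintype.sum_prod_type]
          congr 1
          rw [Fintype.sum_prod_type, Finset.sum_comm]
  have := pow_le_pow_left₀ (hsNorm_nonneg (A * B)) (le_refl (hsNorm (A*B))) 2
  nlinarith [hsNorm_nonneg (A * B), hsNorm_nonneg A, hsNorm_nonneg B,
    mul_nonneg (hsNorm_nonneg A) (hsNorm_nonneg B)]

lemma hsNorm_one_eq : hsNorm (1 : (Matrix (Fin d) (Fin d) ℂ)) = Real.sqrt d := by
  have h : hsNorm (1 : (Matrix (Fin d) (Fin d) ℂ)) ^ 2 = (d : ℝ) := by
    rw [hsNorm_sq]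
    rw [Fintype.sum_prod_type]
    simp [Matrix.one_apply, apply_ite]
  rw [← h, Real.sqrt_sq (hsNorm_nonneg _)]

lemma hsNorm_list_prod_le (l : List ℕ) (v : ℕ → (Matrix (Fin d) (Fin d) ℂ)) :
    hsNorm ((l.map v).prod) ≤ Real.sqrt d * (l.map fun q => hsNorm (v q)).prod := by
  induction l with
  | nil => simp [hsNorm_one_eq]
  | cons q l ih =>
    simp only [List.map_cons, List.prod_cons]
    calc hsNorm (v q * (l.map v).prod) ≤ hsNorm (v q) * hsNorm ((l.map v).prod) :=
          hsNorm_mul_le _ _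
      _ ≤ hsNorm (v q) * (Real.sqrt d * (l.map fun q => hsNorm (v q)).prod) :=
          mul_le_mul_of_nonneg_left ih (hsNorm_nonneg _)
      _ = Real.sqrt d * (hsNorm (v q) * (l.map fun q => hsNorm (v q)).prod) := by ring

lemma list_prod_hsNorm_nonneg (l : List ℕ) (v : ℕ → (Matrix (Fin d) (Fin d) ℂ)) :
    0 ≤ (l.map fun q => hsNorm (v q)).prod := by
  induction l with
  | nil => simp
  | cons q l ih =>
    simp only [List.map_cons, List.prod_cons]
    exact mul_nonneg (hsNorm_nonneg _) ih

section Meas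
variable {α : Type*} [MeasurableSpace α]

lemma measurable_entry {F : α → (Matrix (Fin d) (Fin d) ℂ)} (hF : Measurable F) (i j : Fin d) :
    Measurable fun z => F z i j := by
  have h1 : Measurable fun m : (Matrix (Fin d) (Fin d) ℂ) => m i j :=
    (measurable_pi_apply j).comp (measurable_pi_apply i)
  exact h1.comp hF

lemma measurable_of_entries {F : α → (Matrix (Fin d) (Fin d) ℂ)} (hF : ∀ i j, Measurable fun z => F z i j) :
    Measurable F := by
  apply measurable_pi_lambda
  intro i
  exact measurable_pi_lambda _ (hF i)

lemma measurable_mat_mul {F G : α → (Matrix (Fin d) (Fin d) ℂ)} (hF : Measurable F) (hG : Measurable G) :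
    Measurable fun z => F z * G z := by
  apply measurable_of_entries
  intro i j
  simp only [Matrix.mul_apply]
  exact Finset.measurable_sum _ fun l _ =>
    ((measurable_entry hF i l).mul (measurable_entry hG l j))

lemma measurable_list_prod (l : List ℕ) {v : α → ℕ → (Matrix (Fin d) (Fin d) ℂ)}
    (hv : ∀ q, Measurable fun z => v z q) :
    Measurable fun z => ((l.map (v z)).prod) := by
  induction l with
  | nil => simpa using measurable_const
  | cons q l ih =>
    simp only [List.map_cons, List.prod_cons]
    exact measurable_mat_mul (hv q) ih

lemma measurable_rmfV {v : α → ℕ → (Matrix (Fin d) (Fin d) ℂ)} (hv : ∀ q, Measurable fun z => v z q) (n : ℕ) :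
    Measurable fun z => rmfV (v z) n := by
  by_cases hn : Squarefree n
  · simp only [rmfV, if_pos hn]
    exact measurable_list_prod _ hv
  · simp only [rmfV, if_neg hn]
    exact measurable_const

lemma measurable_minner {F G : α → (Matrix (Fin d) (Fin d) ℂ)} (hF : Measurable F) (hG : Measurable G) :
    Measurable fun z => minner (F z) (G z) := by
  have : ∀ z, minner (F z) (G z)
      = ∑ p : Fin d × Fin d, (starRingEnd ℂ) (F z p.1 p.2) * G z p.1 p.2 :=
    fun z => minner_eq_sum _ _
  simp only [this]
  exact Finset.measurable_sum _ fun p _ =>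
    ((Complex.continuous_conj.measurable.comp (measurable_entry hF p.1 p.2)).mul
      (measurable_entry hG p.1 p.2))

lemma measurable_hsNorm {F : α → (Matrix (Fin d) (Fin d) ℂ)} (hF : Measurable F) :
    Measurable fun z => hsNorm (F z) := by
  have : ∀ z, hsNorm (F z) = Real.sqrt ((minner (F z) (F z)).re) := by
    intro z
    rw [minner_self, ← Complex.ofReal_pow, Complex.ofReal_re,
      Real.sqrt_sq (hsNorm_nonneg _)]
  simp only [this]
  exact Real.continuous_sqrt.measurable.comp
    (Complex.measurable_re.comp (measurable_minner hF hF))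

end Meas


section Prob

variable {Ω : Type*} [MeasurableSpace Ω] {μ : Measure Ω} [IsProbabilityMeasure μ]
  {g : ℕ → Ω → (Matrix (Fin d) (Fin d) ℂ)} {k : ℕ}

lemma measurable_rmf (hmeas : ∀ p, Measurable (g p)) (n : ℕ) :
    Measurable fun ω => rmf g n ω := by
  have : (fun ω => rmf g n ω) = fun ω => rmfV (fun q => g q ω) n := rfl
  rw [this]
  exact measurable_rmfV (fun q => hmeas q) n

lemma measurable_hs_rmf_pow (hmeas : ∀ p, Measurable (g p)) (n m : ℕ) :
    Measurable fun ω => hsNorm (rmf g n ω) ^ m :=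
  (measurable_hsNorm (measurable_rmf hmeas n)).pow_const m

/-- Expectation of a product of independent nonneg functions of the `g p`. -/
lemma lintegral_indep_prod (hmeas : ∀ p, Measurable (g p))
    (hindep : iIndepFun g μ)
    {φ : (Matrix (Fin d) (Fin d) ℂ) → ℝ≥0∞} (hφ : Measurable φ) (s : Finset ℕ) :
    ∫⁻ ω, ∏ p ∈ s, φ (g p ω) ∂μ = ∏ p ∈ s, ∫⁻ ω, φ (g p ω) ∂μ := by
  classical
  have hH : iIndepFun (fun p => φ ∘ g p) μ :=
    hindep.comp (fun _ => φ) (fun _ => hφ)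
  induction s using Finset.induction with
  | empty => simp
  | @insert p s hp ih =>
    have heq : (∏ j ∈ s, φ ∘ g j) = fun ω => ∏ j ∈ s, φ (g j ω) := by
      funext ω; simp [Finset.prod_apply]
    have hind : IndepFun (∏ j ∈ s, φ ∘ g j) (φ ∘ g p) μ :=
      hH.indepFun_finsetProd_of_notMem (fun i => (hφ.comp (hmeas i))) hp
    rw [heq] at hind
    calc ∫⁻ ω, ∏ q ∈ insert p s, φ (g q ω) ∂μ
        = ∫⁻ ω, ((φ ∘ g p) * fun ω => ∏ j ∈ s, φ (g j ω)) ω ∂μ := by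
          simp only [Finset.prod_insert hp]; rfl
      _ = (∫⁻ ω, φ (g p ω) ∂μ) * ∫⁻ ω, ∏ j ∈ s, φ (g j ω) ∂μ :=
          lintegral_mul_eq_lintegral_mul_lintegral_of_indepFun (hφ.comp (hmeas p))
            (Finset.measurable_prod _ fun i _ => hφ.comp (hmeas i)) hind.symm
      _ = _ := by rw [ih, Finset.prod_insert hp]

lemma lintegral_hs_g_lt_top (hmeas : ∀ p, Measurable (g p))
    (hident : ∀ p, μ.map (g p) = μ.map (g 0))
    (hmom : Integrable (fun ω => hsNorm (g 0 ω) ^ (2 * k)) μ) (p : ℕ) :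
    ∫⁻ ω, ENNReal.ofReal (hsNorm (g p ω) ^ (2 * k)) ∂μ < ⊤ := by
  have hφ : Measurable fun m : (Matrix (Fin d) (Fin d) ℂ) => ENNReal.ofReal (hsNorm m ^ (2 * k)) :=
    ENNReal.measurable_ofReal.comp ((measurable_hsNorm measurable_id).pow_const _)
  have h1 : ∫⁻ ω, ENNReal.ofReal (hsNorm (g p ω) ^ (2 * k)) ∂μ
      = ∫⁻ ω, ENNReal.ofReal (hsNorm (g 0 ω) ^ (2 * k)) ∂μ := by
    rw [← lintegral_map hφ (hmeas p), hident p, lintegral_map hφ (hmeas 0)]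
  rw [h1]
  have h2 : 0 ≤ᵐ[μ] fun ω => hsNorm (g 0 ω) ^ (2 * k) :=
    Filter.Eventually.of_forall fun ω => pow_nonneg (hsNorm_nonneg _) _
  exact (hasFiniteIntegral_iff_ofReal h2).mp hmom.2

/-- Finiteness of moments of `rmf`. -/
lemma lintegral_hs_rmf_lt_top (hk0 : k ≠ 0) (hmeas : ∀ p, Measurable (g p))
    (hindep : iIndepFun g μ)
    (hident : ∀ p, μ.map (g p) = μ.map (g 0))
    (hmom : Integrable (fun ω => hsNorm (g 0 ω) ^ (2 * k)) μ) (n : ℕ) :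
    ∫⁻ ω, ENNReal.ofReal (hsNorm (rmf g n ω) ^ (2 * k)) ∂μ < ⊤ := by
  by_cases hn : Squarefree n
  · have hbd : ∀ ω, ENNReal.ofReal (hsNorm (rmf g n ω) ^ (2 * k))
        ≤ ENNReal.ofReal ((Real.sqrt d) ^ (2 * k)) *
          ∏ p ∈ n.primeFactors, ENNReal.ofReal (hsNorm (g p ω) ^ (2 * k)) := by
      intro ω
      have hb : hsNorm (rmf g n ω)
          ≤ Real.sqrt d * ∏ p ∈ n.primeFactors, hsNorm (g p ω) := by
        have := hsNorm_list_prod_le (d := d) n.primeFactorsList (fun q => g q ω)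
        rw [rmf, if_pos hn]
        refine le_trans this ?_
        rw [Nat.primeFactors]
        rw [List.prod_toFinset _ hn.nodup_primeFactorsList]
      have hb2 : hsNorm (rmf g n ω) ^ (2 * k)
          ≤ (Real.sqrt d * ∏ p ∈ n.primeFactors, hsNorm (g p ω)) ^ (2 * k) :=
        pow_le_pow_left₀ (hsNorm_nonneg _) hb _
      calc ENNReal.ofReal (hsNorm (rmf g n ω) ^ (2 * k))
          ≤ ENNReal.ofReal ((Real.sqrt d * ∏ p ∈ n.primeFactors, hsNorm (g p ω)) ^ (2 * k)) :=
            ENNReal.ofReal_le_ofReal hb2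
        _ = ENNReal.ofReal ((Real.sqrt d) ^ (2 * k) *
              ∏ p ∈ n.primeFactors, hsNorm (g p ω) ^ (2 * k)) := by
            rw [mul_pow, ← Finset.prod_pow]
        _ = _ := by
            rw [ENNReal.ofReal_mul (by positivity)]
            congr 1
            exact ENNReal.ofReal_prod_of_nonneg fun i _ => pow_nonneg (hsNorm_nonneg _) _
    have hφ : Measurable fun m : (Matrix (Fin d) (Fin d) ℂ) => ENNReal.ofReal (hsNorm m ^ (2 * k)) :=
      ENNReal.measurable_ofReal.comp ((measurable_hsNorm measurable_id).pow_const _)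
    calc ∫⁻ ω, ENNReal.ofReal (hsNorm (rmf g n ω) ^ (2 * k)) ∂μ
        ≤ ∫⁻ ω, ENNReal.ofReal ((Real.sqrt d) ^ (2 * k)) *
            ∏ p ∈ n.primeFactors, ENNReal.ofReal (hsNorm (g p ω) ^ (2 * k)) ∂μ :=
          lintegral_mono hbd
      _ = ENNReal.ofReal ((Real.sqrt d) ^ (2 * k)) *
            ∫⁻ ω, ∏ p ∈ n.primeFactors, ENNReal.ofReal (hsNorm (g p ω) ^ (2 * k)) ∂μ :=
          lintegral_const_mul _ (Finset.measurable_prod _ fun i _ => hφ.comp (hmeas i))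
      _ = ENNReal.ofReal ((Real.sqrt d) ^ (2 * k)) *
            ∏ p ∈ n.primeFactors, ∫⁻ ω, ENNReal.ofReal (hsNorm (g p ω) ^ (2 * k)) ∂μ := by
          rw [lintegral_indep_prod hmeas hindep hφ]
      _ < ⊤ := by
          refine ENNReal.mul_lt_top ENNReal.ofReal_lt_top ?_
          exact ENNReal.prod_lt_top fun p _ =>
            (lintegral_hs_g_lt_top hmeas hident hmom p)
  · have : ∀ ω, rmf g n ω = 0 := fun ω => by rw [rmf, if_neg hn]
    simp only [this]
    have h0 : hsNorm (0 : (Matrix (Fin d) (Fin d) ℂ)) = 0 := by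
      simp [hsNorm]
    rw [h0]
    rw [zero_pow (by omega)]
    simp

/-- The generic term in the expansion of the `2k`-th moment. -/
noncomputable def Pterm {Ω : Type*} (g : ℕ → Ω → (Matrix (Fin d) (Fin d) ℂ)) (k : ℕ)
    (t : Fin k × Fin 2 → ℕ) (ω : Ω) : ℂ :=
  ∏ j : Fin k, minner (rmf g (t (j, 0)) ω) (rmf g (t (j, 1)) ω)

lemma norm_Pterm_le (g : ℕ → Ω → (Matrix (Fin d) (Fin d) ℂ)) (t : Fin k × Fin 2 → ℕ) (ω : Ω) :
    ‖Pterm g k t ω‖ ≤ ∏ i : Fin k × Fin 2, hsNorm (rmf g (t i) ω) := by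
  rw [Pterm, norm_prod]
  calc ∏ j : Fin k, ‖minner (rmf g (t (j, 0)) ω) (rmf g (t (j, 1)) ω)‖
      ≤ ∏ j : Fin k, hsNorm (rmf g (t (j, 0)) ω) * hsNorm (rmf g (t (j, 1)) ω) :=
        Finset.prod_le_prod (fun j _ => norm_nonneg _) (fun j _ => norm_minner_le _ _)
    _ = ∏ i : Fin k × Fin 2, hsNorm (rmf g (t i) ω) := by
        rw [Fintype.prod_prod_type]
        exact Finset.prod_congr rfl fun j _ =>
          (Fin.prod_univ_two (fun y => hsNorm (rmf g (t (j, y)) ω))).symm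

lemma measurable_Pterm (hmeas : ∀ p, Measurable (g p)) (t : Fin k × Fin 2 → ℕ) :
    Measurable fun ω => Pterm g k t ω := by
  apply Finset.measurable_prod
  intro j _
  exact measurable_minner (measurable_rmf hmeas _) (measurable_rmf hmeas _)

lemma hoelder_block (hk0 : k ≠ 0) (hmeas : ∀ p, Measurable (g p))
    (hindep : iIndepFun g μ)
    (hident : ∀ p, μ.map (g p) = μ.map (g 0))
    (hmom : Integrable (fun ω => hsNorm (g 0 ω) ^ (2 * k)) μ)
    (t : Fin k × Fin 2 → ℕ) :
    Integrable (fun ω => ∏ i : Fin k × Fin 2, hsNorm (rmf g (t i) ω)) μ ∧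
    ∫ ω, ∏ i : Fin k × Fin 2, hsNorm (rmf g (t i) ω) ∂μ ≤
      ∏ i : Fin k × Fin 2, (∫ ω, hsNorm (rmf g (t i) ω) ^ (2 * k) ∂μ) ^ (1 / (2 * (k : ℝ))) := by
  set F : Fin k × Fin 2 → Ω → ℝ≥0∞ :=
    fun i ω => ENNReal.ofReal (hsNorm (rmf g (t i) ω)) with hF
  have hFmeas : ∀ i, Measurable (F i) := fun i =>
    ENNReal.measurable_ofReal.comp (measurable_hsNorm (measurable_rmf hmeas _))
  have hc : ((2 * k : ℕ) : ℝ) ≠ 0 := by positivity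
  have hkey : ∫⁻ ω, ∏ i : Fin k × Fin 2, F i ω ∂μ ≤
      ∏ i : Fin k × Fin 2, (∫⁻ ω, F i ω ^ ((2 * k : ℕ) : ℝ) ∂μ) ^ (1 / (2 * (k : ℝ))) := by
    have := ENNReal.lintegral_prod_norm_pow_le (μ := μ) Finset.univ
      (f := fun i ω => F i ω ^ ((2 * k : ℕ) : ℝ))
      (fun i _ => ((hFmeas i).pow_const _).aemeasurable)
      (p := fun _ => 1 / (2 * (k : ℝ)))
      (by
        rw [Finset.sum_const, Finset.card_univ, Fintype.card_prod, Fintype.card_fin,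
          Fintype.card_fin, nsmul_eq_mul]
        push_cast
        field_simp)
      (fun i _ => by positivity)
    refine le_trans (le_of_eq ?_) this
    apply lintegral_congr
    intro ω
    apply Finset.prod_congr rfl
    intro i _
    show F i ω = (F i ω ^ ((2 * k : ℕ) : ℝ)) ^ (1 / (2 * (k : ℝ)))
    rw [← ENNReal.rpow_mul, show ((2 * k : ℕ) : ℝ) * (1 / (2 * (k : ℝ))) = 1 by
      push_cast; field_simp, ENNReal.rpow_one]
  have hFpow : ∀ i ω, F i ω ^ ((2 * k : ℕ) : ℝ) = ENNReal.ofReal (hsNorm (rmf g (t i) ω) ^ (2 * k)) := by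
    intro i ω
    rw [ENNReal.rpow_natCast, ← ENNReal.ofReal_pow (hsNorm_nonneg _)]
  have hLfin : ∀ i, ∫⁻ ω, F i ω ^ ((2 * k : ℕ) : ℝ) ∂μ < ⊤ := by
    intro i
    simp only [hFpow]
    exact lintegral_hs_rmf_lt_top hk0 hmeas hindep hident hmom (t i)
  have hGnn : ∀ ω, 0 ≤ ∏ i : Fin k × Fin 2, hsNorm (rmf g (t i) ω) :=
    fun ω => Finset.prod_nonneg fun i _ => hsNorm_nonneg _
  have hGmeas : Measurable fun ω => ∏ i : Fin k × Fin 2, hsNorm (rmf g (t i) ω) :=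
    Finset.measurable_prod _ fun i _ => measurable_hsNorm (measurable_rmf hmeas _)
  have hofG : ∀ ω, ENNReal.ofReal (∏ i : Fin k × Fin 2, hsNorm (rmf g (t i) ω))
      = ∏ i : Fin k × Fin 2, F i ω := by
    intro ω
    exact ENNReal.ofReal_prod_of_nonneg fun i _ => hsNorm_nonneg _
  have hRHSfin : ∏ i : Fin k × Fin 2, (∫⁻ ω, F i ω ^ ((2 * k : ℕ) : ℝ) ∂μ) ^ (1 / (2 * (k : ℝ))) < ⊤ :=
    ENNReal.prod_lt_top fun i _ =>
      ENNReal.rpow_lt_top_of_nonneg (by positivity) (hLfin i).ne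
  have hGint : Integrable (fun ω => ∏ i : Fin k × Fin 2, hsNorm (rmf g (t i) ω)) μ := by
    refine ⟨hGmeas.aestronglyMeasurable, ?_⟩
    rw [hasFiniteIntegral_iff_ofReal (Filter.Eventually.of_forall hGnn)]
    calc ∫⁻ ω, ENNReal.ofReal (∏ i : Fin k × Fin 2, hsNorm (rmf g (t i) ω)) ∂μ
        = ∫⁻ ω, ∏ i : Fin k × Fin 2, F i ω ∂μ := lintegral_congr hofG
      _ ≤ _ := hkey
      _ < ⊤ := hRHSfin
  refine ⟨hGint, ?_⟩
  have hInt2R : ∀ i, ∫ ω, hsNorm (rmf g (t i) ω) ^ (2 * k) ∂μ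
      = (∫⁻ ω, F i ω ^ ((2 * k : ℕ) : ℝ) ∂μ).toReal := by
    intro i
    rw [integral_eq_lintegral_of_nonneg_ae
      (Filter.Eventually.of_forall fun ω => pow_nonneg (hsNorm_nonneg _) _)
      ((measurable_hs_rmf_pow hmeas _ _).aestronglyMeasurable)]
    congr 1
    exact lintegral_congr fun ω => (hFpow i ω).symm
  rw [integral_eq_lintegral_of_nonneg_ae (Filter.Eventually.of_forall hGnn)
    hGmeas.aestronglyMeasurable]
  calc (∫⁻ ω, ENNReal.ofReal (∏ i : Fin k × Fin 2, hsNorm (rmf g (t i) ω)) ∂μ).toReal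
      ≤ (∏ i : Fin k × Fin 2, (∫⁻ ω, F i ω ^ ((2 * k : ℕ) : ℝ) ∂μ) ^ (1 / (2 * (k : ℝ)))).toReal := by
        apply ENNReal.toReal_mono hRHSfin.ne
        calc ∫⁻ ω, ENNReal.ofReal (∏ i : Fin k × Fin 2, hsNorm (rmf g (t i) ω)) ∂μ
            = ∫⁻ ω, ∏ i : Fin k × Fin 2, F i ω ∂μ := lintegral_congr hofG
          _ ≤ _ := hkey
    _ = ∏ i : Fin k × Fin 2, (∫ ω, hsNorm (rmf g (t i) ω) ^ (2 * k) ∂μ) ^ (1 / (2 * (k : ℝ))) := by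
        rw [ENNReal.toReal_prod]
        apply Finset.prod_congr rfl
        intro i _
        rw [hInt2R i, ENNReal.toReal_rpow]

lemma integrable_Pterm (hk0 : k ≠ 0) (hmeas : ∀ p, Measurable (g p))
    (hindep : iIndepFun g μ)
    (hident : ∀ p, μ.map (g p) = μ.map (g 0))
    (hmom : Integrable (fun ω => hsNorm (g 0 ω) ^ (2 * k)) μ)
    (t : Fin k × Fin 2 → ℕ) :
    Integrable (fun ω => Pterm g k t ω) μ := by
  refine Integrable.mono (hoelder_block hk0 hmeas hindep hident hmom t).1
    (measurable_Pterm hmeas t).aestronglyMeasurable ?_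
  refine Filter.Eventually.of_forall fun ω => ?_
  refine le_trans (norm_Pterm_le g t ω) ?_
  exact le_abs_self _

lemma rmfV_congr (v w : ℕ → (Matrix (Fin d) (Fin d) ℂ))
    (n : ℕ) (h : ∀ q ∈ n.primeFactorsList, v q = w q) : rmfV v n = rmfV w n := by
  unfold rmfV
  by_cases hn : Squarefree n
  · rw [if_pos hn, if_pos hn, List.map_congr_left h]
  · rw [if_neg hn, if_neg hn]

/-- The key vanishing lemma: if some prime appears an odd number of times among the `t i`,
then the expectation of `Pterm` vanishes. -/
lemma vanish (hmeas : ∀ p, Measurable (g p))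
    (hindep : iIndepFun g μ)
    (hident : ∀ p, μ.map (g p) = μ.map (g 0))
    (hsymm : μ.map (g 0) = μ.map (fun ω => -(g 0 ω)))
    (N : ℕ) (t : Fin k × Fin 2 → ℕ)
    (ht : ∀ i, t i ∈ Finset.Icc 1 N)
    (hint : Integrable (fun ω => Pterm g k t ω) μ)
    (p : ℕ) (hp : p.Prime)
    (hodd : Odd (Finset.univ.filter (fun i => p ∣ t i)).card) :
    ∫ ω, Pterm g k t ω ∂μ = 0 := by
  classical
  set B : Finset ℕ := (Finset.range (N + 1)).erase p with hB
  set X : Ω → (({p} : Finset ℕ) → (Matrix (Fin d) (Fin d) ℂ)) :=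
    fun ω i => g i ω with hX
  set Y : Ω → (B → (Matrix (Fin d) (Fin d) ℂ)) := fun ω q => g q ω with hY
  have hXmeas : Measurable X := measurable_pi_lambda _ fun i => hmeas i
  have hYmeas : Measurable Y := measurable_pi_lambda _ fun q => hmeas q
  have hXY : IndepFun X Y μ :=
    hindep.indepFun_finset {p} B
      (Finset.disjoint_singleton_left.mpr (Finset.notMem_erase p _)) hmeas
  -- the functional realization
  set vA : (({p} : Finset ℕ) → (Matrix (Fin d) (Fin d) ℂ)) →
      (B → (Matrix (Fin d) (Fin d) ℂ)) → ℕ → (Matrix (Fin d) (Fin d) ℂ) :=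
    fun x y q =>
      if hq : q = p then x ⟨p, Finset.mem_singleton_self p⟩
      else if hq2 : q ∈ B then y ⟨q, hq2⟩ else 0 with hvA
  set Φ : (({p} : Finset ℕ) → (Matrix (Fin d) (Fin d) ℂ)) ×
      (B → (Matrix (Fin d) (Fin d) ℂ)) → ℂ :=
    fun z => ∏ j : Fin k,
      minner (rmfV (vA z.1 z.2) (t (j, 0))) (rmfV (vA z.1 z.2) (t (j, 1))) with hΦ
  have hvAmeas : ∀ q, Measurable fun z :
      (({p} : Finset ℕ) → (Matrix (Fin d) (Fin d) ℂ)) ×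
      (B → (Matrix (Fin d) (Fin d) ℂ)) => vA z.1 z.2 q := by
    intro q
    by_cases hq : q = p
    · simp only [hvA, dif_pos hq]
      exact (measurable_pi_apply _).comp measurable_fst
    · by_cases hq2 : q ∈ B
      · simp only [hvA, dif_neg hq, dif_pos hq2]
        exact (measurable_pi_apply _).comp measurable_snd
      · simp only [hvA, dif_neg hq, dif_neg hq2]
        exact measurable_const
  have hΦmeas : Measurable Φ := by
    apply Finset.measurable_prod
    intro j _
    exact measurable_minner
      (measurable_rmfV (v := fun (z : (({p} : Finset ℕ) → (Matrix (Fin d) (Fin d) ℂ)) × (B → (Matrix (Fin d) (Fin d) ℂ))) => vA z.1 z.2) hvAmeas _)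
      (measurable_rmfV (v := fun (z : (({p} : Finset ℕ) → (Matrix (Fin d) (Fin d) ℂ)) × (B → (Matrix (Fin d) (Fin d) ℂ))) => vA z.1 z.2) hvAmeas _)
  have hagree : ∀ ω i, rmf g (t i) ω = rmfV (vA (X ω) (Y ω)) (t i) := by
    intro ω i
    rw [rmf_eq_rmfV]
    apply rmfV_congr
    intro q hq
    have hq1 : q ∣ t i := Nat.dvd_of_mem_primeFactorsList hq
    have hti : t i ∈ Finset.Icc 1 N := ht i
    rw [Finset.mem_Icc] at hti
    have hqN : q ≤ N := le_trans (Nat.le_of_dvd (by omega) hq1) hti.2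
    by_cases hqp : q = p
    · simp only [hvA, dif_pos hqp, hX]
      subst hqp; rfl
    · have hqB : q ∈ B := Finset.mem_erase.mpr ⟨hqp, Finset.mem_range.mpr (by omega)⟩
      simp only [hvA, dif_neg hqp, dif_pos hqB, hY]
  have hPΦ : ∀ ω, Pterm g k t ω = Φ (X ω, Y ω) := by
    intro ω
    rw [Pterm, hΦ]
    exact Finset.prod_congr rfl fun j _ => by rw [hagree ω (j, 0), hagree ω (j, 1)]
  -- laws
  set ν := μ.map X with hν0
  set ρ := μ.map Y with hρ0
  haveI : IsProbabilityMeasure ν := Measure.isProbabilityMeasure_map hXmeas.aemeasurable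
  haveI : IsProbabilityMeasure ρ := Measure.isProbabilityMeasure_map hYmeas.aemeasurable
  have hlaw : μ.map (fun ω => (X ω, Y ω)) = ν.prod ρ :=
    (indepFun_iff_map_prod_eq_prod_map_map hXmeas.aemeasurable hYmeas.aemeasurable).mp hXY
  have hΦint : Integrable Φ (ν.prod ρ) := by
    rw [← hlaw]
    rw [integrable_map_measure hΦmeas.aestronglyMeasurable
      (hXmeas.prodMk hYmeas).aemeasurable]
    have : (Φ ∘ fun ω => (X ω, Y ω)) = fun ω => Pterm g k t ω := by
      funext ω; exact (hPΦ ω).symm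
    rw [this]
    exact hint
  -- symmetry of ν
  have hnegmat : Measurable (fun m : (Matrix (Fin d) (Fin d) ℂ) => -m) := by
    apply measurable_of_entries
    intro i j
    exact (measurable_entry measurable_id i j).neg
  have hnegpi : Measurable (fun x : (({p} : Finset ℕ) → (Matrix (Fin d) (Fin d) ℂ)) => -x) :=
    measurable_pi_lambda _ fun i => hnegmat.comp (measurable_pi_apply i)
  have hsymp : μ.map (g p) = (μ.map (g p)).map (fun m => -m) := by
    calc μ.map (g p) = μ.map (g 0) := hident p
      _ = μ.map (fun ω => -(g 0 ω)) := hsymm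
      _ = (μ.map (g 0)).map (fun m => -m) := by
          rw [Measure.map_map hnegmat (hmeas 0)]; rfl
      _ = (μ.map (g p)).map (fun m => -m) := by rw [hident p]
  have hXe : X = (fun m => fun _ : ({p} : Finset ℕ) => m) ∘ g p := by
    funext ω i
    have : (i : ℕ) = p := Finset.mem_singleton.mp i.2
    simp only [hX, Function.comp_apply, this]
  have hemeas : Measurable (fun m : (Matrix (Fin d) (Fin d) ℂ) =>
      fun _ : ({p} : Finset ℕ) => m) := measurable_pi_lambda _ fun _ => measurable_id
  have hνsym : ν.map (fun x => -x) = ν := by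
    rw [hν0, hXe, ← Measure.map_map hemeas (hmeas p), Measure.map_map hnegpi hemeas]
    have hcomm : ((fun x : (({p} : Finset ℕ) → (Matrix (Fin d) (Fin d) ℂ)) => -x) ∘
        fun m => fun _ : ({p} : Finset ℕ) => m)
        = (fun m => fun _ : ({p} : Finset ℕ) => m) ∘ (fun m => -m) := rfl
    rw [hcomm, ← Measure.map_map hemeas hnegmat, ← hsymp]
  -- oddness
  have hflip : ∀ x y, Φ (-x, y) = -Φ (x, y) := by
    intro x y
    have hv' : ∀ q, vA (-x) y q = if q = p then -(vA x y q) else vA x y q := by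
      intro q
      by_cases hq : q = p
      · simp only [hvA, dif_pos hq, if_pos hq, Pi.neg_apply]
      · simp only [hvA, dif_neg hq, if_neg hq]
    have hrm : ∀ n, rmfV (vA (-x) y) n
        = if p ∣ n then -(rmfV (vA x y) n) else rmfV (vA x y) n :=
      rmfV_flip p hp (vA x y) (vA (-x) y) hv'
    set ε : Fin k × Fin 2 → ℂ := fun i => if p ∣ t i then -1 else 1 with hε
    have hfac : ∀ j : Fin k,
        minner (rmfV (vA (-x) y) (t (j, 0))) (rmfV (vA (-x) y) (t (j, 1)))
        = (ε (j, 0) * ε (j, 1)) *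
          minner (rmfV (vA x y) (t (j, 0))) (rmfV (vA x y) (t (j, 1))) := by
      intro j
      rw [hrm, hrm, hε]
      by_cases h1 : p ∣ t (j, 0) <;> by_cases h2 : p ∣ t (j, 1) <;>
        simp [h1, h2, minner_neg_left, minner_neg_right]
    have hprodε : ∏ i : Fin k × Fin 2, ε i = -1 := by
      rw [← Finset.prod_filter_mul_prod_filter_not Finset.univ (fun i => p ∣ t i)]
      have h1 : ∏ i ∈ Finset.univ.filter (fun i => p ∣ t i), ε i
          = (-1 : ℂ) ^ (Finset.univ.filter (fun i => p ∣ t i)).card := by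
        rw [Finset.prod_congr rfl (fun i hi => by
          simp only [hε]; rw [if_pos (Finset.mem_filter.mp hi).2]), Finset.prod_const]
      have h2 : ∏ i ∈ Finset.univ.filter (fun i => ¬ p ∣ t i), ε i = 1 := by
        rw [Finset.prod_congr rfl (fun i hi => by
          simp only [hε]; rw [if_neg (Finset.mem_filter.mp hi).2]), Finset.prod_const, one_pow]
      rw [h1, h2, mul_one, hodd.neg_one_pow]
    calc Φ (-x, y) = ∏ j : Fin k, (ε (j, 0) * ε (j, 1)) *
          minner (rmfV (vA x y) (t (j, 0))) (rmfV (vA x y) (t (j, 1))) := by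
          rw [hΦ]
          exact Finset.prod_congr rfl fun j _ => hfac j
      _ = (∏ j : Fin k, ε (j, 0) * ε (j, 1)) * Φ (x, y) := by
          rw [hΦ, Finset.prod_mul_distrib]
      _ = (∏ i : Fin k × Fin 2, ε i) * Φ (x, y) := by
          congr 1
          rw [Fintype.prod_prod_type]
          exact Finset.prod_congr rfl fun j _ => (Fin.prod_univ_two (fun s => ε (j, s))).symm
      _ = -Φ (x, y) := by rw [hprodε, neg_one_mul]
  -- put it together
  have hstep : ∫ ω, Pterm g k t ω ∂μ = ∫ z, Φ z ∂(ν.prod ρ) := by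
    rw [← hlaw, integral_map (hXmeas.prodMk hYmeas).aemeasurable
      hΦmeas.aestronglyMeasurable]
    exact integral_congr_ae (Filter.Eventually.of_forall fun ω => hPΦ ω)
  rw [hstep, integral_prod_symm Φ hΦint]
  have hinner : ∀ y, ∫ x, Φ (x, y) ∂ν = 0 := by
    intro y
    have hsect : Measurable fun x => Φ (x, y) := hΦmeas.comp measurable_prodMk_right
    have h1 : ∫ x, Φ (x, y) ∂ν = ∫ x, Φ (-x, y) ∂ν := by
      conv_lhs => rw [← hνsym]
      rw [integral_map hnegpi.aemeasurable]
      rw [hνsym]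
      exact hsect.aestronglyMeasurable
    have h2 : ∫ x, Φ (-x, y) ∂ν = -∫ x, Φ (x, y) ∂ν := by
      rw [← integral_neg]
      exact integral_congr_ae (Filter.Eventually.of_forall fun x => hflip x y)
    have h3 : ∫ x, Φ (x, y) ∂ν = -∫ x, Φ (x, y) ∂ν := h1.trans h2
    have h4 : (∫ x, Φ (x, y) ∂ν) + (∫ x, Φ (x, y) ∂ν) = 0 := by
      nth_rewrite 1 [h3]; ring
    exact add_self_eq_zero.mp h4
  simp only [hinner, integral_zero]

end Prob

lemma isSquare_of_even_factorization {n : ℕ} (hn : n ≠ 0)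
    (h : ∀ p, Even (n.factorization p)) : IsSquare n := by
  refine ⟨∏ p ∈ n.factorization.support, p ^ (n.factorization p / 2), ?_⟩
  have key : (∏ p ∈ n.factorization.support, p ^ (n.factorization p / 2)) *
      (∏ p ∈ n.factorization.support, p ^ (n.factorization p / 2))
      = ∏ p ∈ n.factorization.support, p ^ (n.factorization p) := by
    rw [← Finset.prod_mul_distrib]
    apply Finset.prod_congr rfl
    intro p _
    rw [← pow_add]
    congr 1
    obtain ⟨c, hc⟩ := h p
    omega
  rw [key]
  conv_lhs => rw [← Nat.factorization_prod_pow_eq_self hn]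
  rfl

end Aux


open Aux Finset in
theorem stmt18 {d k : ℕ} (hd : 1 ≤ d) (hk : 2 ≤ k) {Ω : Type*} [MeasurableSpace Ω]
    (μ : Measure Ω) [IsProbabilityMeasure μ]
    (g : ℕ → Ω → Matrix (Fin d) (Fin d) ℂ)
    (hmeas : ∀ p, Measurable (g p))
    (hindep : iIndepFun g μ)
    (hident : ∀ p, μ.map (g p) = μ.map (g 0))
    (hsymm : μ.map (g 0) = μ.map (fun ω => -(g 0 ω)))
    (hzero : ∀ i j, (∫ ω, g 0 ω i j ∂μ) = 0)
    (hmom : Integrable (fun ω => hsNorm (g 0 ω) ^ (2 * k)) μ)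
    (N : ℕ) :
    (∫ ω, hsNorm (∑ n ∈ Finset.Icc 1 N, rmf g n ω) ^ (2 * k) ∂μ) ≤
      ∑ t ∈ Fintype.piFinset (fun _ : Fin (2 * k) => Finset.Icc 1 N),
        if IsSquare (∏ i, t i) then
          ∏ i, (∫ ω, hsNorm (rmf g (t i) ω) ^ (2 * k) ∂μ) ^ (1 / (2 * (k : ℝ)))
        else 0 := by
  classical
  have hk0 : k ≠ 0 := by omega
  set S : Ω → Matrix (Fin d) (Fin d) ℂ := fun ω => ∑ n ∈ Finset.Icc 1 N, rmf g n ω with hS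
  -- pointwise expansion
  have hexp : ∀ ω, hsNorm (S ω) ^ (2 * k)
      = (∑ t ∈ Fintype.piFinset (fun _ : Fin k × Fin 2 => Finset.Icc 1 N),
          Pterm g k t ω).re := by
    intro ω
    have e0 : hsNorm (S ω) ^ (2 * k) = ((minner (S ω) (S ω)) ^ k).re := by
      rw [minner_self, ← pow_mul, ← Complex.ofReal_pow, Complex.ofReal_re]
    rw [e0]
    congr 1
    have e1 : (minner (S ω) (S ω)) ^ k = ∏ _j : Fin k, minner (S ω) (S ω) := by
      rw [Finset.prod_const, Finset.card_univ, Fintype.card_fin]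
    have e2 : minner (S ω) (S ω)
        = ∑ q ∈ Finset.Icc 1 N ×ˢ Finset.Icc 1 N, minner (rmf g q.1 ω) (rmf g q.2 ω) := by
      rw [hS, minner_sum, Finset.sum_product]
    rw [e1]
    calc ∏ _j : Fin k, minner (S ω) (S ω)
        = ∏ _j : Fin k, ∑ q ∈ Finset.Icc 1 N ×ˢ Finset.Icc 1 N,
            minner (rmf g q.1 ω) (rmf g q.2 ω) := by
          exact Finset.prod_congr rfl fun j _ => e2
      _ = ∑ u ∈ Fintype.piFinset (fun _ : Fin k => Finset.Icc 1 N ×ˢ Finset.Icc 1 N),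
            ∏ j : Fin k, minner (rmf g (u j).1 ω) (rmf g (u j).2 ω) := by
          rw [Finset.prod_univ_sum]
      _ = ∑ t ∈ Fintype.piFinset (fun _ : Fin k × Fin 2 => Finset.Icc 1 N),
            Pterm g k t ω := by
          apply Finset.sum_nbij'
            (i := fun u (i : Fin k × Fin 2) => if i.2 = 0 then (u i.1).1 else (u i.1).2)
            (j := fun t (j : Fin k) => (t (j, 0), t (j, 1)))
          · intro u hu
            rw [Fintype.mem_piFinset] at hu ⊢
            intro i
            have := hu i.1
            rw [Finset.mem_product] at this
            by_cases h : i.2 = 0 <;> simp [h, this.1, this.2]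
          · intro t ht
            rw [Fintype.mem_piFinset] at ht ⊢
            intro j
            rw [Finset.mem_product]
            exact ⟨ht (j, 0), ht (j, 1)⟩
          · intro u hu
            funext j
            simp
          · intro t ht
            funext i
            obtain ⟨j, s⟩ := i
            fin_cases s <;> simp
          · intro u hu
            rw [Pterm]
            exact Finset.prod_congr rfl fun j _ => by simp
  -- move integral inside
  have hPint : ∀ t ∈ Fintype.piFinset (fun _ : Fin k × Fin 2 => Finset.Icc 1 N),
      Integrable (fun ω => Pterm g k t ω) μ := fun t _ =>
    integrable_Pterm hk0 hmeas hindep hident hmom t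
  have hswap : ∫ ω, hsNorm (S ω) ^ (2 * k) ∂μ
      = ∑ t ∈ Fintype.piFinset (fun _ : Fin k × Fin 2 => Finset.Icc 1 N),
          (∫ ω, Pterm g k t ω ∂μ).re := by
    calc ∫ ω, hsNorm (S ω) ^ (2 * k) ∂μ
        = ∫ ω, ∑ t ∈ Fintype.piFinset (fun _ : Fin k × Fin 2 => Finset.Icc 1 N),
            (Pterm g k t ω).re ∂μ := by
          apply integral_congr_ae
          apply Filter.Eventually.of_forall
          intro ω
          dsimp only
          rw [hexp ω, Complex.re_sum]
      _ = ∑ t ∈ Fintype.piFinset (fun _ : Fin k × Fin 2 => Finset.Icc 1 N),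
            ∫ ω, (Pterm g k t ω).re ∂μ := by
          apply integral_finset_sum
          intro t ht
          exact (hPint t ht).re
      _ = _ := by
          apply Finset.sum_congr rfl
          intro t ht
          exact integral_re (hPint t ht)
  rw [hswap]
  -- termwise bound
  have hterm : ∀ t ∈ Fintype.piFinset (fun _ : Fin k × Fin 2 => Finset.Icc 1 N),
      (∫ ω, Pterm g k t ω ∂μ).re ≤
        (if IsSquare (∏ i : Fin k × Fin 2, t i) then
          ∏ i : Fin k × Fin 2, (∫ ω, hsNorm (rmf g (t i) ω) ^ (2 * k) ∂μ) ^ (1 / (2 * (k : ℝ)))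
        else 0) := by
    intro t ht
    rw [Fintype.mem_piFinset] at ht
    have hRHSnn : 0 ≤ ∏ i : Fin k × Fin 2,
        (∫ ω, hsNorm (rmf g (t i) ω) ^ (2 * k) ∂μ) ^ (1 / (2 * (k : ℝ))) :=
      Finset.prod_nonneg fun i _ => Real.rpow_nonneg
        (integral_nonneg fun ω => pow_nonneg (hsNorm_nonneg _) _) _
    by_cases hsf : ∀ i, Squarefree (t i)
    · by_cases hsq : IsSquare (∏ i : Fin k × Fin 2, t i)
      · rw [if_pos hsq]
        have hblock := hoelder_block (μ := μ) (g := g) hk0 hmeas hindep hident hmom t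
        calc (∫ ω, Pterm g k t ω ∂μ).re
            ≤ ‖∫ ω, Pterm g k t ω ∂μ‖ := Complex.re_le_norm _
          _ ≤ ∫ ω, ‖Pterm g k t ω‖ ∂μ := norm_integral_le_integral_norm _
          _ ≤ ∫ ω, ∏ i : Fin k × Fin 2, hsNorm (rmf g (t i) ω) ∂μ := by
              apply integral_mono_of_nonneg
                (Filter.Eventually.of_forall fun ω => norm_nonneg _) hblock.1
              exact Filter.Eventually.of_forall fun ω => norm_Pterm_le g t ω
          _ ≤ _ := hblock.2
      · rw [if_neg hsq]
        -- find an odd prime multiplicity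
        have hne : ∀ i, t i ≠ 0 := by
          intro i
          have := ht i
          rw [Finset.mem_Icc] at this
          omega
        have hprodne : (∏ i : Fin k × Fin 2, t i) ≠ 0 := Finset.prod_ne_zero_iff.mpr
          fun i _ => hne i
        have hex : ∃ p, ¬ Even ((∏ i : Fin k × Fin 2, t i).factorization p) := by
          by_contra hcon
          push_neg at hcon
          exact hsq (isSquare_of_even_factorization hprodne fun p => by
            simpa using hcon p)
        obtain ⟨p, hpodd⟩ := hex
        have hp : p.Prime := by
          by_contra hnp
          rw [Nat.factorization_eq_zero_of_not_prime _ hnp] at hpodd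
          exact hpodd Even.zero
        have hfact : (∏ i : Fin k × Fin 2, t i).factorization p
            = (Finset.univ.filter (fun i => p ∣ t i)).card := by
          rw [Nat.factorization_prod (fun i _ => hne i)]
          rw [Finsupp.finset_sum_apply]
          rw [Finset.card_filter]
          apply Finset.sum_congr rfl
          intro i _
          by_cases hdvd : p ∣ t i
          · rw [if_pos hdvd]
            exact Nat.factorization_eq_one_of_squarefree (hsf i) hp hdvd
          · rw [if_neg hdvd]
            exact Nat.factorization_eq_zero_of_not_dvd hdvd
        have hodd : Odd (Finset.univ.filter (fun i => p ∣ t i)).card := by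
          rw [← hfact]
          rwa [← Nat.not_even_iff_odd]
        have hv := vanish hmeas hindep hident hsymm N t (fun i => ht i)
          (integrable_Pterm hk0 hmeas hindep hident hmom t) p hp hodd
        rw [hv]
        simp
    · -- some t i is not squarefree: the term vanishes pointwise
      push_neg at hsf
      obtain ⟨i0, hi0⟩ := hsf
      have h01 : i0 = (i0.1, 0) ∨ i0 = (i0.1, 1) := by
        rcases i0 with ⟨j, s⟩
        fin_cases s
        · left; rfl
        · right; rfl
      have hzero' : ∀ ω, Pterm g k t ω = 0 := by
        intro ω
        rw [Pterm]
        apply Finset.prod_eq_zero (Finset.mem_univ i0.1)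
        rcases h01 with h | h
        · rw [h] at hi0
          have hrz : rmf g (t (i0.1, 0)) ω = 0 := by rw [rmf, if_neg hi0]
          rw [hrz, minner_zero_left]
        · rw [h] at hi0
          have hrz : rmf g (t (i0.1, 1)) ω = 0 := by rw [rmf, if_neg hi0]
          rw [hrz, minner_zero_right]
      simp only [hzero', integral_zero, Complex.zero_re]
      split
      · exact hRHSnn
      · exact le_refl 0
  refine le_trans (Finset.sum_le_sum hterm) (le_of_eq ?_)
  -- reindex from `Fin k × Fin 2` to `Fin (2 * k)`
  have e : Fin k × Fin 2 ≃ Fin (2 * k) :=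
    finProdFinEquiv.trans (finCongr (by ring))
  apply Finset.sum_nbij' (i := fun t => t ∘ e.symm) (j := fun tt => tt ∘ e)
  · intro t htmem
    rw [Fintype.mem_piFinset] at htmem ⊢
    intro i
    exact htmem (e.symm i)
  · intro tt httmem
    rw [Fintype.mem_piFinset] at httmem ⊢
    intro i
    exact httmem (e i)
  · intro t _
    funext i
    simp
  · intro tt _
    funext i
    simp
  · intro t _
    have hps : (∏ i : Fin (2 * k), t (e.symm i)) = ∏ i : Fin k × Fin 2, t i :=
      Equiv.prod_comp e.symm t
    have hvs : (∏ i : Fin (2 * k),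
        (∫ ω, hsNorm (rmf g (t (e.symm i)) ω) ^ (2 * k) ∂μ) ^ (1 / (2 * (k : ℝ))))
        = ∏ i : Fin k × Fin 2,
          (∫ ω, hsNorm (rmf g (t i) ω) ^ (2 * k) ∂μ) ^ (1 / (2 * (k : ℝ))) :=
      Equiv.prod_comp e.symm
        (fun i => (∫ ω, hsNorm (rmf g (t i) ω) ^ (2 * k) ∂μ) ^ (1 / (2 * (k : ℝ))))
    simp only [Function.comp_apply]
    rw [hps, hvs]
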